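/- Let m and n be natural numbers with 4 ≤ m < n. Let G be the simple graph obtained from the disjoint union K_m ⊔ K_n as follows: delete an edge uv of K_m and an edge u'v' of K_n, and add the two edges uu' and vv'. Then G is Hamiltonian, i.e., G contains a cycle passing through every vertex exactly once. -/

import Mathlib

open SimpleGraph

/-- A walk along a chain-adjacent list. -/
def walkAux {V : Type} (G : SimpleGraph V) :
    (a : V) → (l : List V) → List.Chain G.Adj a l →
      G.Walk a ((a :: l).getLast (List.cons_ne_nil a l))
  | _, [], _ => SimpleGraph.Walk.nil
  | a, b :: t, h =>
      SimpleGraph.Walk.cons (List.chain_cons.mp h).1 (walkAux G b t (List.chain_cons.mp h).2)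

lemma walkAux_support {V : Type} (G : SimpleGraph V) :
    ∀ (a : V) (l : List V) (h : List.Chain G.Adj a l),
      (walkAux G a l h).support = a :: l
  | _, [], _ => rfl
  | a, b :: t, h => by
      show (SimpleGraph.Walk.cons _ (walkAux G b t _)).support = _
      rw [SimpleGraph.Walk.support_cons]
      exact congrArg (List.cons a) (walkAux_support G b t _)

lemma ham_of_list {V : Type} [DecidableEq V] [Fintype V] (G : SimpleGraph V)
    (a b : V) (t : List V) (ht : t ≠ [])
    (hch : List.Chain G.Adj a (b :: t))
    (hlast : G.Adj (((b : V) :: t).getLast (List.cons_ne_nil b t)) a)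
    (hnd : (a :: b :: t).Nodup)
    (hall : ∀ x : V, x ∈ a :: b :: t) :
    ∃ (x : V) (p : G.Walk x x), p.IsHamiltonianCycle := by
  obtain ⟨hab, hbt⟩ := List.chain_cons.mp hch
  have hna : a ∉ b :: t := (List.nodup_cons.mp hnd).1
  have hnbt : b ∉ t := (List.nodup_cons.mp (List.nodup_cons.mp hnd).2).1
  have hperm : (a :: b :: t).Perm ((b :: t) ++ [a]) :=
    (List.perm_append_singleton a (b :: t)).symm
  have hndall : ((b :: t) ++ [a]).Nodup := hperm.nodup hnd
  set w := walkAux G b t hbt with hw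
  have hsupw : w.support = b :: t := walkAux_support G b t hbt
  set p := w.concat hlast with hp
  have hsupp : p.support = (b :: t) ++ [a] := by
    rw [hp, SimpleGraph.Walk.support_concat, hsupw]
  refine ⟨a, SimpleGraph.Walk.cons hab p, ?_⟩
  rw [SimpleGraph.Walk.isHamiltonianCycle_iff_isCycle_and_support_count_tail_eq_one]
  constructor
  · rw [SimpleGraph.Walk.cons_isCycle_iff]
    constructor
    · exact SimpleGraph.Walk.IsPath.mk' (by rw [hsupp]; exact hndall)
    · intro hmem
      rw [hp, SimpleGraph.Walk.edges_concat, List.concat_eq_append, List.mem_append,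
        List.mem_singleton] at hmem
      rcases hmem with hmem | hmem
      · have := SimpleGraph.Walk.fst_mem_support_of_mem_edges w hmem
        rw [hsupw] at this
        exact hna this
      · rw [Sym2.eq_iff] at hmem
        rcases hmem with ⟨-, hba⟩ | ⟨-, hbl⟩
        · exact hab.ne hba.symm
        · have hmem2 : (b :: t).getLast (List.cons_ne_nil b t) ∈ t := by
            rw [List.getLast_cons ht]
            exact List.getLast_mem ht
          rw [← hbl] at hmem2
          exact hnbt hmem2
  · intro x
    have htail : ((SimpleGraph.Walk.cons hab p).support).tail = (b :: t) ++ [a] := by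
      rw [SimpleGraph.Walk.support_cons, List.tail_cons, hsupp]
    rw [htail]
    exact List.count_eq_one_of_mem hndall (hperm.mem_iff.mp (hall x))

lemma ham_of_list' {V : Type} [DecidableEq V] [Fintype V] (G : SimpleGraph V)
    (a : V) (l : List V) (hl : 2 ≤ l.length)
    (hch : List.Chain' G.Adj (a :: l))
    (hlast : ∀ h : l ≠ [], G.Adj (l.getLast h) a)
    (hnd : (a :: l).Nodup)
    (hall : ∀ x : V, x ∈ a :: l) :
    ∃ (x : V) (p : G.Walk x x), p.IsHamiltonianCycle := by
  match l, hl with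
  | b :: t, hl =>
    have ht : t ≠ [] := by
      intro h
      subst h
      simp at hl
    exact ham_of_list G a b t ht hch (hlast (List.cons_ne_nil b t)) hnd hall


/-- The disjoint union of cliques `K_m ⊔ K_n`. -/
def cliqueSum (m n : ℕ) : SimpleGraph (Fin m ⊕ Fin n) :=
  (⊤ : SimpleGraph (Fin m)) ⊕g (⊤ : SimpleGraph (Fin n))

/-- The degree multiset of a finite simple graph. -/
def degreeMultiset {V : Type} [Fintype V] (G : SimpleGraph V) [DecidableRel G.Adj] :
    Multiset ℕ :=
  Finset.univ.val.map fun v => G.degree v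

/-- Membership in the class `G_{m,n}`: a graph on `m + n` vertices whose degree multiset
equals that of `K_m ⊔ K_n` and which is not isomorphic to `K_m ⊔ K_n`. -/
def MemGmn (m n : ℕ) {V : Type} [Fintype V] (G : SimpleGraph V) [DecidableRel G.Adj] : Prop :=
  Fintype.card V = m + n ∧
  degreeMultiset G = Multiset.replicate m (m - 1) + Multiset.replicate n (n - 1) ∧
  IsEmpty (G ≃g cliqueSum m n)

theorem stmt_18 (m n : ℕ) (hm : 4 ≤ m) (hmn : m < n)
    (u v : Fin m) (huv : u ≠ v) (u' v' : Fin n) (huv' : u' ≠ v')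
    (G : SimpleGraph (Fin m ⊕ Fin n))
    (hG : G = ((cliqueSum m n).deleteEdges
        {s(Sum.inl u, Sum.inl v), s(Sum.inr u', Sum.inr v')} ⊔
      SimpleGraph.fromEdgeSet {s(Sum.inl u, Sum.inr u'), s(Sum.inl v, Sum.inr v')})) :
    ∃ (a : Fin m ⊕ Fin n) (p : G.Walk a a), p.IsHamiltonianCycle := by
  classical
  -- the lists of "other" vertices
  set A := ((Finset.univ.erase v).erase u).toList with hAdef
  set B := ((Finset.univ.erase v').erase u').toList with hBdef
  have hAmem : ∀ x ∈ A, x ≠ u ∧ x ≠ v := by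
    intro x hx
    rw [hAdef, Finset.mem_toList, Finset.mem_erase, Finset.mem_erase] at hx
    exact ⟨hx.1, hx.2.1⟩
  have hBmem : ∀ x ∈ B, x ≠ u' ∧ x ≠ v' := by
    intro x hx
    rw [hBdef, Finset.mem_toList, Finset.mem_erase, Finset.mem_erase] at hx
    exact ⟨hx.1, hx.2.1⟩
  have hAmem' : ∀ x : Fin m, x ≠ u → x ≠ v → x ∈ A := by
    intro x h1 h2
    rw [hAdef, Finset.mem_toList, Finset.mem_erase, Finset.mem_erase]
    exact ⟨h1, h2, Finset.mem_univ x⟩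
  have hBmem' : ∀ x : Fin n, x ≠ u' → x ≠ v' → x ∈ B := by
    intro x h1 h2
    rw [hBdef, Finset.mem_toList, Finset.mem_erase, Finset.mem_erase]
    exact ⟨h1, h2, Finset.mem_univ x⟩
  have hAnd : A.Nodup := Finset.nodup_toList _
  have hBnd : B.Nodup := Finset.nodup_toList _
  have hAlen : A.length = m - 2 := by
    rw [hAdef, Finset.length_toList,
      Finset.card_erase_of_mem (Finset.mem_erase.mpr ⟨huv, Finset.mem_univ u⟩),
      Finset.card_erase_of_mem (Finset.mem_univ v), Finset.card_univ, Fintype.card_fin]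
    omega
  have hBlen : B.length = n - 2 := by
    rw [hBdef, Finset.length_toList,
      Finset.card_erase_of_mem (Finset.mem_erase.mpr ⟨huv', Finset.mem_univ u'⟩),
      Finset.card_erase_of_mem (Finset.mem_univ v'), Finset.card_univ, Fintype.card_fin]
    omega
  have hAne : A ≠ [] := by
    intro h
    rw [h] at hAlen
    simp at hAlen
    omega
  have hBne : B ≠ [] := by
    intro h
    rw [h] at hBlen
    simp at hBlen
    omega
  -- adjacency lemmas
  have adj_inl : ∀ x y : Fin m, x ≠ y → ¬(x = u ∧ y = v) → ¬(x = v ∧ y = u) →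
      G.Adj (Sum.inl x) (Sum.inl y) := by
    intro x y hxy h1 h2
    subst hG
    simp only [SimpleGraph.sup_adj, SimpleGraph.deleteEdges_adj, cliqueSum,
      SimpleGraph.sum_adj, SimpleGraph.top_adj, Set.mem_insert_iff, Set.mem_singleton_iff,
      Sym2.eq_iff, Sum.inl.injEq, Sum.inr.injEq]
    left
    refine ⟨hxy, ?_⟩
    push_neg
    refine ⟨⟨fun h h' => h1 ⟨h, h'⟩, fun h h' => h2 ⟨h, h'⟩⟩, ?_⟩
    simp
  have adj_inr : ∀ x y : Fin n, x ≠ y → ¬(x = u' ∧ y = v') → ¬(x = v' ∧ y = u') →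
      G.Adj (Sum.inr x) (Sum.inr y) := by
    intro x y hxy h1 h2
    subst hG
    simp only [SimpleGraph.sup_adj, SimpleGraph.deleteEdges_adj, cliqueSum,
      SimpleGraph.sum_adj, SimpleGraph.top_adj, Set.mem_insert_iff, Set.mem_singleton_iff,
      Sym2.eq_iff, Sum.inl.injEq, Sum.inr.injEq]
    left
    refine ⟨hxy, ?_⟩
    push_neg
    refine ⟨?_, fun h h' => h1 ⟨h, h'⟩, fun h h' => h2 ⟨h, h'⟩⟩
    simp
  have adj_vv' : G.Adj (Sum.inl v) (Sum.inr v') := by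
    subst hG
    simp [SimpleGraph.fromEdgeSet_adj]
  have adj_u'u : G.Adj (Sum.inr u') (Sum.inl u) := by
    subst hG
    simp [SimpleGraph.fromEdgeSet_adj]
  -- apply the generic lemma
  apply ham_of_list' G (Sum.inl u)
    ((A.map Sum.inl ++ [Sum.inl v]) ++ ((Sum.inr v' :: B.map Sum.inr) ++ [Sum.inr u']))
  · -- length
    simp only [List.length_append, List.length_cons, List.length_map, List.length_singleton]
    omega
  · -- chain
    have hkey : (Sum.inl u : Fin m ⊕ Fin n) ::
        ((A.map Sum.inl ++ [Sum.inl v]) ++ ((Sum.inr v' :: B.map Sum.inr) ++ [Sum.inr u'])) =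
        (((Sum.inl u :: A.map Sum.inl) ++ [Sum.inl v]) ++
          ((Sum.inr v' :: B.map Sum.inr) ++ [Sum.inr u'])) := by
      simp
    show List.Chain' G.Adj _
    rw [hkey]
    have hmapAne : A.map (Sum.inl : Fin m → Fin m ⊕ Fin n) ≠ [] := by
      simpa using hAne
    have hmapBne : B.map (Sum.inr : Fin n → Fin m ⊕ Fin n) ≠ [] := by
      simpa using hBne
    have c1 : List.Chain' G.Adj (Sum.inl u :: A.map Sum.inl) := by
      have : (Sum.inl u :: A.map Sum.inl : List (Fin m ⊕ Fin n)) = (u :: A).map Sum.inl := rfl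
      rw [this]; show List.IsChain _ _; rw [List.isChain_map]
      apply List.Pairwise.isChain
      have hndu : (u :: A).Nodup :=
        List.nodup_cons.mpr ⟨fun h => (hAmem u h).1 rfl, hAnd⟩
      refine List.Pairwise.imp_of_mem ?_ hndu
      intro x y hx hy hxy
      have hxv : x ≠ v := by
        rcases List.mem_cons.mp hx with rfl | hx'
        · exact huv
        · exact (hAmem x hx').2
      have hyv : y ≠ v := by
        rcases List.mem_cons.mp hy with rfl | hy'
        · exact huv
        · exact (hAmem y hy').2
      exact adj_inl x y hxy (fun h => hyv h.2) (fun h => hxv h.1)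
    have c3 : List.Chain' G.Adj (Sum.inr v' :: B.map Sum.inr) := by
      have : (Sum.inr v' :: B.map Sum.inr : List (Fin m ⊕ Fin n)) = (v' :: B).map Sum.inr := rfl
      rw [this]; show List.IsChain _ _; rw [List.isChain_map]
      apply List.Pairwise.isChain
      have hndv : (v' :: B).Nodup :=
        List.nodup_cons.mpr ⟨fun h => (hBmem v' h).2 rfl, hBnd⟩
      refine List.Pairwise.imp_of_mem ?_ hndv
      intro x y hx hy hxy
      have hxu : x ≠ u' := by
        rcases List.mem_cons.mp hx with rfl | hx'
        · exact huv'.symm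
        · exact (hBmem x hx').1
      have hyu : y ≠ u' := by
        rcases List.mem_cons.mp hy with rfl | hy'
        · exact huv'.symm
        · exact (hBmem y hy').1
      exact adj_inr x y hxy (fun h => hxu h.1) (fun h => hyu h.2)
    have gl1 : (Sum.inl u :: A.map Sum.inl : List (Fin m ⊕ Fin n)).getLast? =
        some (Sum.inl (A.getLast hAne)) := by
      rw [List.getLast?_eq_getLast_of_ne_nil (List.cons_ne_nil _ _),
        List.getLast_cons hmapAne, List.getLast_map]
    have gl3 : (Sum.inr v' :: B.map Sum.inr : List (Fin m ⊕ Fin n)).getLast? =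
        some (Sum.inr (B.getLast hBne)) := by
      rw [List.getLast?_eq_getLast_of_ne_nil (List.cons_ne_nil _ _),
        List.getLast_cons hmapBne, List.getLast_map]
    refine List.IsChain.append ?_ ?_ ?_
    · -- left part : (inl u :: map inl A) ++ [inl v]
      refine List.IsChain.append c1 (List.isChain_singleton _) ?_
      intro x hx y hy
      rw [gl1] at hx
      simp only [Option.mem_def, Option.some.injEq] at hx hy
      subst hx
      rw [List.head?_cons, Option.some.injEq] at hy
      subst hy
      have hmem := List.getLast_mem hAne
      obtain ⟨h1, h2⟩ := hAmem _ hmem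
      exact adj_inl _ v h2 (fun h => h1 h.1) (fun h => h2 h.1)
    · -- right part
      refine List.IsChain.append c3 (List.isChain_singleton _) ?_
      intro x hx y hy
      rw [gl3] at hx
      simp only [Option.mem_def, Option.some.injEq] at hx hy
      subst hx
      rw [List.head?_cons, Option.some.injEq] at hy
      subst hy
      have hmem := List.getLast_mem hBne
      obtain ⟨h1, h2⟩ := hBmem _ hmem
      exact adj_inr _ u' h1 (fun h => h1 h.1) (fun h => h2 h.1)
    · -- middle link : inl v → inr v'
      intro x hx y hy
      rw [List.getLast?_concat] at hx
      simp only [Option.mem_def, Option.some.injEq] at hx hy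
      subst hx
      rw [List.cons_append, List.head?_cons, Option.some.injEq] at hy
      subst hy
      exact adj_vv'
  · -- last adjacent to first
    intro h
    have : ((A.map Sum.inl ++ [Sum.inl v]) ++
        ((Sum.inr v' :: B.map Sum.inr) ++ [Sum.inr u'])).getLast h = Sum.inr u' := by
      have he : (A.map Sum.inl ++ [Sum.inl v]) ++
          ((Sum.inr v' :: B.map Sum.inr) ++ [Sum.inr u']) =
          ((A.map Sum.inl ++ [Sum.inl v]) ++ (Sum.inr v' :: B.map Sum.inr)) ++ [Sum.inr u'] := by
        simp
      rw [List.getLast_congr _ (by simp) he]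
      exact List.getLast_concat
    rw [this]
    exact adj_u'u
  · -- nodup
    have hkey : (Sum.inl u : Fin m ⊕ Fin n) ::
        ((A.map Sum.inl ++ [Sum.inl v]) ++ ((Sum.inr v' :: B.map Sum.inr) ++ [Sum.inr u'])) =
        ((u :: (A ++ [v])).map Sum.inl) ++ ((v' :: (B ++ [u'])).map Sum.inr) := by
      simp
    rw [hkey]
    rw [List.nodup_append]
    refine ⟨?_, ?_, ?_⟩
    · rw [List.nodup_map_iff Sum.inl_injective]
      rw [List.nodup_cons, List.nodup_append]
      refine ⟨?_, hAnd, List.nodup_singleton _, ?_⟩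
      · simp only [List.mem_append, List.mem_singleton]
        rintro (h | rfl)
        · exact (hAmem u h).1 rfl
        · exact huv rfl
      · intro x hx
        simp only [List.mem_singleton]
        rintro _ rfl hxv
        subst hxv
        exact (hAmem _ hx).2 rfl
    · rw [List.nodup_map_iff Sum.inr_injective]
      rw [List.nodup_cons, List.nodup_append]
      refine ⟨?_, hBnd, List.nodup_singleton _, ?_⟩
      · simp only [List.mem_append, List.mem_singleton]
        rintro (h | rfl)
        · exact (hBmem v' h).2 rfl
        · exact huv' rfl
      · intro x hx
        simp only [List.mem_singleton]
        rintro _ rfl hxu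
        subst hxu
        exact (hBmem _ hx).1 rfl
    · intro x hx y hy hxy
      simp only [List.mem_map] at hx hy
      obtain ⟨a, -, rfl⟩ := hx
      obtain ⟨b, -, hb⟩ := hy
      subst hb
      simp at hxy
  · -- covers everything
    intro x
    rcases x with y | y
    · by_cases h1 : y = u
      · subst h1; exact List.mem_cons_self
      · by_cases h2 : y = v
        · subst h2
          simp
        · have := hAmem' y h1 h2
          simp [this]
    · by_cases h1 : y = v'
      · subst h1
        simp
      · by_cases h2 : y = u'
        · subst h2
          simp
        · have := hBmem' y h2 h1
          simp [this]
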